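/- Let λ = (λ₁,λ₂,λ₃) ∈ ℂ³ with λ₁+λ₂+λ₃ = 0, and let Re λ := (Re λ₁, Re λ₂, Re λ₃) (which also sums to 0). Then for all y₁,y₂ > 0, the value W_{Re λ}(y₁,y₂) is real and strictly positive, and |W_λ(y₁,y₂)| ≤ W_{Re λ}(y₁,y₂). -/

import Mathlib

open scoped Real
open MeasureTheory Set

noncomputable section

/-- Real version of the Bessel integral. -/
def KR (a u : ℝ) : ℝ :=
  ∫ t in Set.Ioi (0:ℝ), Real.exp (-(u * Real.cosh t)) * Real.cosh (a * t)

lemma cosh_quad {t : ℝ} (ht : 0 ≤ t) : 1 + t^2/4 ≤ Real.cosh t := by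
  have h1 := Real.quadratic_le_exp_of_nonneg ht
  have h2 := Real.add_one_le_exp (-t)
  rw [Real.cosh_eq]; nlinarith

lemma cosh_le_exp_abs (x : ℝ) : Real.cosh x ≤ Real.exp |x| := by
  rw [Real.cosh_eq]
  have h1 : Real.exp x ≤ Real.exp |x| := Real.exp_le_exp.mpr (le_abs_self x)
  have h2 : Real.exp (-x) ≤ Real.exp |x| := Real.exp_le_exp.mpr (neg_le_abs x)
  linarith

lemma Kint_bound (a : ℝ) {u t : ℝ} (hu : 0 < u) (ht : 0 ≤ t) :
    Real.exp (-(u * Real.cosh t)) * Real.cosh (a * t) ≤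
      Real.exp (a^2/u - u) * Real.exp (-(u/4) * (t - 2*|a|/u)^2) := by
  have hc := cosh_quad ht
  have hch : Real.cosh (a*t) ≤ Real.exp (|a| * t) := by
    calc Real.cosh (a*t) ≤ Real.exp |a*t| := cosh_le_exp_abs _
    _ = Real.exp (|a| * t) := by rw [abs_mul, abs_of_nonneg ht]
  calc Real.exp (-(u * Real.cosh t)) * Real.cosh (a * t)
      ≤ Real.exp (-(u * Real.cosh t)) * Real.exp (|a| * t) := by
        exact mul_le_mul_of_nonneg_left hch (Real.exp_pos _).le
    _ ≤ _ := by
        rw [← Real.exp_add, ← Real.exp_add]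
        apply Real.exp_le_exp.mpr
        have h2 : (u/4) * (t - 2*|a|/u)^2 = u * t^2 / 4 - |a| * t + a^2 / u := by
          have : |a|^2 = a^2 := sq_abs a
          field_simp
          ring_nf
          nlinarith [this]
        nlinarith [mul_le_mul_of_nonneg_left hc hu.le]

lemma K_integrableOn (a : ℝ) {u : ℝ} (hu : 0 < u) :
    IntegrableOn (fun t => Real.exp (-(u * Real.cosh t)) * Real.cosh (a * t)) (Set.Ioi 0) := by
  have hg : Integrable (fun t : ℝ =>
      Real.exp (a^2/u - u) * Real.exp (-(u/4) * (t - 2*|a|/u)^2)) := by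
    exact ((integrable_exp_neg_mul_sq (by positivity : (0:ℝ) < u/4)).comp_sub_right
      (2*|a|/u)).const_mul _
  apply Integrable.mono' hg.integrableOn
  · exact ((Real.continuous_exp.comp ((continuous_const.mul Real.continuous_cosh).neg)).mul
      (Real.continuous_cosh.comp (continuous_const.mul continuous_id))).aestronglyMeasurable
  · rw [ae_restrict_iff' measurableSet_Ioi]
    filter_upwards with t ht
    rw [Real.norm_eq_abs, abs_of_nonneg (by positivity)]
    exact Kint_bound a hu (le_of_lt ht)

/-- The modified Bessel function of the second kind,
`K_ν(u) = ∫₀^∞ e^{-u cosh t} cosh(νt) dt`. -/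
def Kbessel (ν : ℂ) (u : ℝ) : ℂ :=
  ∫ t in Set.Ioi (0:ℝ), Complex.exp (-(u : ℂ) * Real.cosh t) * Complex.cosh (ν * t)


/-- The decaying `SL(3)` Whittaker function, via the Vinogradov–Takhtajan formula. -/
def W (l₁ l₂ l₃ : ℂ) (y₁ y₂ : ℝ) : ℂ :=
  4 * (y₁ : ℂ) ^ (1 - l₂ / 2) * (y₂ : ℂ) ^ (1 + l₂ / 2) *
    ∫ x in Set.Ioi (0:ℝ),
      Kbessel ((l₁ - l₃) / 2) (2 * π * y₁ * Real.sqrt (1 + x)) *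
      Kbessel ((l₁ - l₃) / 2) (2 * π * y₂ * Real.sqrt (1 + x⁻¹)) *
      (x : ℂ) ^ (-(3 * l₂ / 4) - 1)


lemma KR_pos (a : ℝ) {u : ℝ} (hu : 0 < u) : 0 < KR a u := by
  rw [KR]
  rw [setIntegral_pos_iff_support_of_nonneg_ae]
  · have hs : (Function.support fun t =>
        Real.exp (-(u * Real.cosh t)) * Real.cosh (a * t)) ∩ Set.Ioi 0 = Set.Ioi 0 := by
      apply Set.inter_eq_self_of_subset_right
      intro t _
      simp only [Function.mem_support]
      positivity
    rw [hs, Real.volume_Ioi]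
    simp
  · filter_upwards with t
    positivity
  · exact K_integrableOn a hu

lemma KR_ofReal (a u : ℝ) : Kbessel (a : ℂ) u = ((KR a u : ℝ) : ℂ) := by
  rw [Kbessel, KR]
  have h : Set.EqOn (fun t : ℝ => Complex.exp (-(u:ℂ) * Real.cosh t) * Complex.cosh ((a:ℂ) * t))
      (fun t : ℝ => ((Real.exp (-(u * Real.cosh t)) * Real.cosh (a * t) : ℝ) : ℂ)) (Set.Ioi 0) := by
    intro t _
    push_cast [Complex.ofReal_exp, Complex.ofReal_cosh]
    ring
  rw [setIntegral_congr_fun measurableSet_Ioi h]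
  exact integral_ofReal

lemma abs_cosh_le (z : ℂ) : ‖Complex.cosh z‖ ≤ Real.cosh z.re := by
  rw [Complex.cosh, Real.cosh_eq]
  calc ‖(Complex.exp z + Complex.exp (-z)) / 2‖
      ≤ (‖Complex.exp z‖ + ‖Complex.exp (-z)‖) / 2 := by
        rw [norm_div, show ‖(2:ℂ)‖ = 2 by simp]
        gcongr
        exact norm_add_le _ _
    _ = (Real.exp z.re + Real.exp (-z.re)) / 2 := by
        rw [Complex.norm_exp, Complex.norm_exp, Complex.neg_re]

lemma Kbessel_abs_le (ν : ℂ) {u : ℝ} (hu : 0 < u) :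
    ‖Kbessel ν u‖ ≤ KR ν.re u := by
  rw [Kbessel, KR]
  apply norm_integral_le_of_norm_le (K_integrableOn ν.re hu)
  filter_upwards with t
  rw [norm_mul]
  have h1 : ‖Complex.exp (-(u:ℂ) * (Real.cosh t : ℂ))‖ = Real.exp (-(u * Real.cosh t)) := by
    rw [Complex.norm_exp]
    norm_num
  rw [h1]
  have h2 : ‖Complex.cosh (ν * (t:ℂ))‖ ≤ Real.cosh (ν.re * t) := by
    calc ‖Complex.cosh (ν * (t:ℂ))‖ ≤ Real.cosh ((ν * (t:ℂ)).re) := abs_cosh_le _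
      _ = Real.cosh (ν.re * t) := by simp [Complex.mul_re]
  exact mul_le_mul_of_nonneg_left h2 (Real.exp_pos _).le

lemma KR_le (a : ℝ) {u₀ u : ℝ} (h0 : 0 < u₀) (h : u₀ ≤ u) :
    KR a u ≤ Real.exp (u₀ - u) * KR a u₀ := by
  rw [KR, KR, ← integral_const_mul]
  apply setIntegral_mono_on (K_integrableOn a (h0.trans_le h))
    (((K_integrableOn a h0).const_mul _)) measurableSet_Ioi
  intro t _
  have key : Real.exp (-(u * Real.cosh t)) ≤ Real.exp (u₀ - u) * Real.exp (-(u₀ * Real.cosh t)) := by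
    rw [← Real.exp_add]
    apply Real.exp_le_exp.mpr
    nlinarith [Real.one_le_cosh t]
  rw [← mul_assoc]
  exact mul_le_mul_of_nonneg_right key (Real.cosh_pos _).le

lemma KR_stronglyMeasurable (a : ℝ) : StronglyMeasurable (KR a) := by
  have hf : StronglyMeasurable (fun p : ℝ × ℝ =>
      Real.exp (-(p.1 * Real.cosh p.2)) * Real.cosh (a * p.2)) :=
    ((Real.continuous_exp.comp ((continuous_fst.mul
      (Real.continuous_cosh.comp continuous_snd)).neg)).mul
      (Real.continuous_cosh.comp (continuous_const.mul continuous_snd))).stronglyMeasurable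
  exact hf.integral_prod_right'

end

section Fparts

lemma exp_neg_le {y : ℝ} (hy : 0 < y) {n : ℕ} (hn : n ≠ 0) : Real.exp (-y) ≤ ((n:ℝ) / y)^n := by
  have hn' : (0:ℝ) < n := by positivity
  have hyn : (0:ℝ) < y / n := by positivity
  have h0 : y / n ≤ Real.exp (y / n) := by linarith [Real.add_one_le_exp (y / (n:ℝ))]
  have h1 : (y/(n:ℝ))^n ≤ Real.exp y := by
    calc (y/(n:ℝ))^n ≤ (Real.exp (y/(n:ℝ)))^n := pow_le_pow_left₀ hyn.le h0 n
    _ = Real.exp y := by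
        rw [← Real.exp_nat_mul]
        congr 1
        field_simp
  rw [Real.exp_neg]
  have h2 : ((n:ℝ)/y)^n = ((y/(n:ℝ))^n)⁻¹ := by
    rw [← inv_pow, inv_div]
  rw [h2]
  exact inv_anti₀ (by positivity) h1

variable {a p y₁ y₂ : ℝ}

lemma F_bound (a p : ℝ) {y₁ y₂ x : ℝ} (h₁ : 0 < y₁) (h₂ : 0 < y₂) (hx : 0 < x) :
    KR a (2*π*y₁*Real.sqrt (1+x)) * KR a (2*π*y₂*Real.sqrt (1+x⁻¹)) * x ^ p ≤
    ((Real.exp (2*π*y₁) * KR a (2*π*y₁)) * (Real.exp (2*π*y₂) * KR a (2*π*y₂))) *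
      (Real.exp (-(2*π*y₁*Real.sqrt x)) * Real.exp (-(2*π*y₂/Real.sqrt x)) * x ^ p) := by
  have hπ := Real.pi_pos
  have hc₁ : (0:ℝ) < 2*π*y₁ := by positivity
  have hc₂ : (0:ℝ) < 2*π*y₂ := by positivity
  have hs : 0 < Real.sqrt x := Real.sqrt_pos.mpr hx
  have hxi : 0 < x⁻¹ := by positivity
  have hs1 : (1:ℝ) ≤ Real.sqrt (1+x) := by
    exact Real.one_le_sqrt.mpr (by linarith)
  have hs2 : (1:ℝ) ≤ Real.sqrt (1+x⁻¹) := by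
    exact Real.one_le_sqrt.mpr (by linarith)
  have hu₁ : 2*π*y₁ ≤ 2*π*y₁*Real.sqrt (1+x) := le_mul_of_one_le_right hc₁.le hs1
  have hu₂ : 2*π*y₂ ≤ 2*π*y₂*Real.sqrt (1+x⁻¹) := le_mul_of_one_le_right hc₂.le hs2
  have hK1 : KR a (2*π*y₁*Real.sqrt (1+x)) ≤
      Real.exp (2*π*y₁) * Real.exp (-(2*π*y₁*Real.sqrt x)) * KR a (2*π*y₁) := by
    calc KR a (2*π*y₁*Real.sqrt (1+x))
        ≤ Real.exp (2*π*y₁ - 2*π*y₁*Real.sqrt (1+x)) * KR a (2*π*y₁) := KR_le a hc₁ hu₁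
      _ ≤ Real.exp (2*π*y₁) * Real.exp (-(2*π*y₁*Real.sqrt x)) * KR a (2*π*y₁) := by
          apply mul_le_mul_of_nonneg_right _ (KR_pos a hc₁).le
          rw [← Real.exp_add]
          apply Real.exp_le_exp.mpr
          have : 2*π*y₁*Real.sqrt x ≤ 2*π*y₁*Real.sqrt (1+x) :=
            mul_le_mul_of_nonneg_left (Real.sqrt_le_sqrt (by linarith)) hc₁.le
          linarith
  have hK2 : KR a (2*π*y₂*Real.sqrt (1+x⁻¹)) ≤
      Real.exp (2*π*y₂) * Real.exp (-(2*π*y₂/Real.sqrt x)) * KR a (2*π*y₂) := by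
    calc KR a (2*π*y₂*Real.sqrt (1+x⁻¹))
        ≤ Real.exp (2*π*y₂ - 2*π*y₂*Real.sqrt (1+x⁻¹)) * KR a (2*π*y₂) := KR_le a hc₂ hu₂
      _ ≤ Real.exp (2*π*y₂) * Real.exp (-(2*π*y₂/Real.sqrt x)) * KR a (2*π*y₂) := by
          apply mul_le_mul_of_nonneg_right _ (KR_pos a hc₂).le
          rw [← Real.exp_add]
          apply Real.exp_le_exp.mpr
          have h5 : 2*π*y₂/Real.sqrt x ≤ 2*π*y₂*Real.sqrt (1+x⁻¹) := by
            rw [div_eq_mul_inv, ← Real.sqrt_inv]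
            exact mul_le_mul_of_nonneg_left (Real.sqrt_le_sqrt (by linarith)) hc₂.le
          linarith
  have hu₁p : 0 < 2*π*y₁*Real.sqrt (1+x) := hc₁.trans_le hu₁
  have hu₂p : 0 < 2*π*y₂*Real.sqrt (1+x⁻¹) := hc₂.trans_le hu₂
  have hprod : KR a (2*π*y₁*Real.sqrt (1+x)) * KR a (2*π*y₂*Real.sqrt (1+x⁻¹)) ≤
      (Real.exp (2*π*y₁) * Real.exp (-(2*π*y₁*Real.sqrt x)) * KR a (2*π*y₁)) *
      (Real.exp (2*π*y₂) * Real.exp (-(2*π*y₂/Real.sqrt x)) * KR a (2*π*y₂)) :=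
    mul_le_mul hK1 hK2 (KR_pos a hu₂p).le
      (by have := (KR_pos a hc₁).le; positivity)
  have := mul_le_mul_of_nonneg_right hprod (Real.rpow_nonneg hx.le p)
  calc KR a (2*π*y₁*Real.sqrt (1+x)) * KR a (2*π*y₂*Real.sqrt (1+x⁻¹)) * x ^ p
      ≤ (Real.exp (2*π*y₁) * Real.exp (-(2*π*y₁*Real.sqrt x)) * KR a (2*π*y₁)) *
        (Real.exp (2*π*y₂) * Real.exp (-(2*π*y₂/Real.sqrt x)) * KR a (2*π*y₂)) * x ^ p := this
    _ = _ := by ring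

end Fparts

lemma F_measurable (a p y₁ y₂ : ℝ) :
    Measurable (fun x : ℝ =>
      KR a (2*π*y₁*Real.sqrt (1+x)) * KR a (2*π*y₂*Real.sqrt (1+x⁻¹)) * x ^ p) := by
  have hm := (KR_stronglyMeasurable a).measurable
  apply Measurable.mul
  · apply Measurable.mul
    · exact hm.comp (by fun_prop)
    · exact hm.comp (by fun_prop)
  · exact (by fun_prop : Measurable fun x : ℝ => x ^ p)

lemma F_integrableOn (a p : ℝ) {y₁ y₂ : ℝ} (h₁ : 0 < y₁) (h₂ : 0 < y₂) :
    IntegrableOn (fun x =>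
      KR a (2*π*y₁*Real.sqrt (1+x)) * KR a (2*π*y₂*Real.sqrt (1+x⁻¹)) * x ^ p)
      (Set.Ioi 0) := by
  have hπ := Real.pi_pos
  have hc₁ : (0:ℝ) < 2*π*y₁ := by positivity
  have hc₂ : (0:ℝ) < 2*π*y₂ := by positivity
  set C : ℝ := (Real.exp (2*π*y₁) * KR a (2*π*y₁)) * (Real.exp (2*π*y₂) * KR a (2*π*y₂)) with hCdef
  have hC : 0 ≤ C := by
    have k1 := (KR_pos a hc₁).le
    have k2 := (KR_pos a hc₂).le
    positivity
  set n : ℕ := ⌈2*|p|+4⌉₊ with hndef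
  have hn : (2*|p|+4 : ℝ) ≤ n := Nat.le_ceil _
  have hn0 : n ≠ 0 := by
    intro h
    rw [h] at hn
    simp at hn
    nlinarith [abs_nonneg p]
  -- nonnegativity and pointwise-value facts
  have hFnn : ∀ x : ℝ, 0 < x → 0 ≤ KR a (2*π*y₁*Real.sqrt (1+x)) * KR a (2*π*y₂*Real.sqrt (1+x⁻¹)) * x ^ p := by
    intro x hx
    have hxi : 0 < x⁻¹ := by positivity
    have hu₁ : 0 < 2*π*y₁*Real.sqrt (1+x) := by
      have : (0:ℝ) < Real.sqrt (1+x) := Real.sqrt_pos.mpr (by linarith)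
      positivity
    have hu₂ : 0 < 2*π*y₂*Real.sqrt (1+x⁻¹) := by
      have : (0:ℝ) < Real.sqrt (1+x⁻¹) := Real.sqrt_pos.mpr (by linarith)
      positivity
    have := (KR_pos a hu₁).le
    have := (KR_pos a hu₂).le
    positivity
  rw [← Set.Ioc_union_Ioi_eq_Ioi (zero_le_one' ℝ)]
  apply IntegrableOn.union
  · -- on Ioc 0 1
    have hq : (-1:ℝ) < (1/2)*(n:ℝ) + p := by
      have := neg_abs_le p
      linarith
    apply Integrable.mono'
      (((intervalIntegral.intervalIntegrable_rpow' hq).1).const_mul (C * ((n:ℝ)/(2*π*y₂))^n))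
    · exact ((F_measurable a p y₁ y₂).aestronglyMeasurable)
    · rw [ae_restrict_iff' measurableSet_Ioc]
      filter_upwards with x hx
      obtain ⟨hx0, hx1⟩ := hx
      have hs : 0 < Real.sqrt x := Real.sqrt_pos.mpr hx0
      rw [Real.norm_eq_abs, abs_of_nonneg (hFnn x hx0)]
      have hb := F_bound a p h₁ h₂ hx0
      have he1 : Real.exp (-(2*π*y₁*Real.sqrt x)) ≤ 1 := Real.exp_le_one_iff.mpr (neg_nonpos.mpr (by positivity))
      have he2 : Real.exp (-(2*π*y₂/Real.sqrt x)) ≤ ((n:ℝ)/(2*π*y₂))^n * x ^ ((1/2)*(n:ℝ)) := by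
        have hy : 0 < 2*π*y₂/Real.sqrt x := by positivity
        calc Real.exp (-(2*π*y₂/Real.sqrt x)) ≤ ((n:ℝ)/(2*π*y₂/Real.sqrt x))^n :=
              exp_neg_le hy hn0
          _ = ((n:ℝ)/(2*π*y₂))^n * (Real.sqrt x)^n := by
              rw [← mul_pow]
              congr 1
              field_simp
          _ = ((n:ℝ)/(2*π*y₂))^n * x ^ ((1/2)*(n:ℝ)) := by
              congr 1
              rw [Real.sqrt_eq_rpow, ← Real.rpow_natCast (x ^ ((1:ℝ)/2)) n, ← Real.rpow_mul hx0.le]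
      calc KR a (2*π*y₁*Real.sqrt (1+x)) * KR a (2*π*y₂*Real.sqrt (1+x⁻¹)) * x ^ p
          ≤ C * (Real.exp (-(2*π*y₁*Real.sqrt x)) * Real.exp (-(2*π*y₂/Real.sqrt x)) * x ^ p) := hb
        _ ≤ C * (1 * (((n:ℝ)/(2*π*y₂))^n * x ^ ((1/2)*(n:ℝ))) * x ^ p) := by
            apply mul_le_mul_of_nonneg_left _ hC
            apply mul_le_mul_of_nonneg_right _ (Real.rpow_nonneg hx0.le p)
            exact mul_le_mul he1 he2 (Real.exp_pos _).le zero_le_one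
        _ = C * ((n:ℝ)/(2*π*y₂))^n * x ^ ((1/2)*(n:ℝ) + p) := by
            rw [Real.rpow_add hx0]
            ring
  · -- on Ioi 1
    have hq : -(1/2)*(n:ℝ) + p < -1 := by
      have := le_abs_self p
      linarith
    apply Integrable.mono'
      ((integrableOn_Ioi_rpow_of_lt hq one_pos).const_mul (C * ((n:ℝ)/(2*π*y₁))^n))
    · exact ((F_measurable a p y₁ y₂).aestronglyMeasurable)
    · rw [ae_restrict_iff' measurableSet_Ioi]
      filter_upwards with x hx
      have hx0 : (0:ℝ) < x := lt_trans one_pos hx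
      have hs : 0 < Real.sqrt x := Real.sqrt_pos.mpr hx0
      rw [Real.norm_eq_abs, abs_of_nonneg (hFnn x hx0)]
      have hb := F_bound a p h₁ h₂ hx0
      have he2 : Real.exp (-(2*π*y₂/Real.sqrt x)) ≤ 1 := Real.exp_le_one_iff.mpr (neg_nonpos.mpr (by positivity))
      have he1 : Real.exp (-(2*π*y₁*Real.sqrt x)) ≤ ((n:ℝ)/(2*π*y₁))^n * x ^ (-(1/2)*(n:ℝ)) := by
        have hy : 0 < 2*π*y₁*Real.sqrt x := by positivity
        calc Real.exp (-(2*π*y₁*Real.sqrt x)) ≤ ((n:ℝ)/(2*π*y₁*Real.sqrt x))^n :=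
              exp_neg_le hy hn0
          _ = ((n:ℝ)/(2*π*y₁))^n * ((Real.sqrt x)⁻¹)^n := by
              rw [← mul_pow]
              congr 1
              field_simp
          _ = ((n:ℝ)/(2*π*y₁))^n * x ^ (-(1/2)*(n:ℝ)) := by
              congr 1
              rw [Real.sqrt_eq_rpow, ← Real.rpow_neg hx0.le, ← Real.rpow_natCast (x ^ (-((1:ℝ)/2))) n,
                ← Real.rpow_mul hx0.le]
      calc KR a (2*π*y₁*Real.sqrt (1+x)) * KR a (2*π*y₂*Real.sqrt (1+x⁻¹)) * x ^ p
          ≤ C * (Real.exp (-(2*π*y₁*Real.sqrt x)) * Real.exp (-(2*π*y₂/Real.sqrt x)) * x ^ p) := hb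
        _ ≤ C * ((((n:ℝ)/(2*π*y₁))^n * x ^ (-(1/2)*(n:ℝ))) * 1 * x ^ p) := by
            apply mul_le_mul_of_nonneg_left _ hC
            apply mul_le_mul_of_nonneg_right _ (Real.rpow_nonneg hx0.le p)
            exact mul_le_mul he1 he2 (Real.exp_pos _).le (by positivity)
        _ = C * ((n:ℝ)/(2*π*y₁))^n * x ^ (-(1/2)*(n:ℝ) + p) := by
            rw [Real.rpow_add hx0]
            ring

lemma F_pos (a p : ℝ) {y₁ y₂ x : ℝ} (h₁ : 0 < y₁) (h₂ : 0 < y₂) (hx : 0 < x) :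
    0 < KR a (2*π*y₁*Real.sqrt (1+x)) * KR a (2*π*y₂*Real.sqrt (1+x⁻¹)) * x ^ p := by
  have hπ := Real.pi_pos
  have hxi : 0 < x⁻¹ := by positivity
  have hu₁ : 0 < 2*π*y₁*Real.sqrt (1+x) := by
    have : (0:ℝ) < Real.sqrt (1+x) := Real.sqrt_pos.mpr (by linarith)
    positivity
  have hu₂ : 0 < 2*π*y₂*Real.sqrt (1+x⁻¹) := by
    have : (0:ℝ) < Real.sqrt (1+x⁻¹) := Real.sqrt_pos.mpr (by linarith)
    positivity
  have k1 := KR_pos a hu₁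
  have k2 := KR_pos a hu₂
  positivity

lemma F_intpos (a p : ℝ) {y₁ y₂ : ℝ} (h₁ : 0 < y₁) (h₂ : 0 < y₂) :
    0 < ∫ x in Set.Ioi (0:ℝ),
      KR a (2*π*y₁*Real.sqrt (1+x)) * KR a (2*π*y₂*Real.sqrt (1+x⁻¹)) * x ^ p := by
  rw [setIntegral_pos_iff_support_of_nonneg_ae]
  · have hsub : Set.Ioi (0:ℝ) ⊆ Function.support (fun x =>
        KR a (2*π*y₁*Real.sqrt (1+x)) * KR a (2*π*y₂*Real.sqrt (1+x⁻¹)) * x ^ p) := by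
      intro x hx
      exact ne_of_gt (F_pos a p h₁ h₂ hx)
    rw [Set.inter_eq_self_of_subset_right hsub, Real.volume_Ioi]
    simp
  · rw [Filter.EventuallyLE, ae_restrict_iff' measurableSet_Ioi]
    filter_upwards with x hx
    exact (F_pos a p h₁ h₂ hx).le
  · exact F_integrableOn a p h₁ h₂

theorem statement9 (l₁ l₂ l₃ : ℂ) (hsum : l₁ + l₂ + l₃ = 0)
    (y₁ y₂ : ℝ) (h₁ : 0 < y₁) (h₂ : 0 < y₂) :
    (W (l₁.re : ℂ) (l₂.re : ℂ) (l₃.re : ℂ) y₁ y₂).im = 0 ∧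
    0 < (W (l₁.re : ℂ) (l₂.re : ℂ) (l₃.re : ℂ) y₁ y₂).re ∧
    ‖W l₁ l₂ l₃ y₁ y₂‖ ≤ (W (l₁.re : ℂ) (l₂.re : ℂ) (l₃.re : ℂ) y₁ y₂).re := by
  have hπ := Real.pi_pos
  set a : ℝ := (l₁.re - l₃.re)/2 with ha
  set p : ℝ := -(3*l₂.re/4) - 1 with hp
  set I : ℝ := ∫ x in Set.Ioi (0:ℝ),
      KR a (2*π*y₁*Real.sqrt (1+x)) * KR a (2*π*y₂*Real.sqrt (1+x⁻¹)) * x ^ p with hI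
  have hIpos : 0 < I := F_intpos a p h₁ h₂
  -- the real-parameter W is the coercion of a positive real
  have hint : (∫ x in Set.Ioi (0:ℝ),
      Kbessel (((l₁.re:ℂ) - (l₃.re:ℂ)) / 2) (2 * π * y₁ * Real.sqrt (1 + x)) *
      Kbessel (((l₁.re:ℂ) - (l₃.re:ℂ)) / 2) (2 * π * y₂ * Real.sqrt (1 + x⁻¹)) *
      (x : ℂ) ^ (-(3 * (l₂.re:ℂ) / 4) - 1)) = (I : ℂ) := by
    rw [hI]
    have h : Set.EqOn (fun x : ℝ =>
        Kbessel (((l₁.re:ℂ) - (l₃.re:ℂ)) / 2) (2 * π * y₁ * Real.sqrt (1 + x)) *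
        Kbessel (((l₁.re:ℂ) - (l₃.re:ℂ)) / 2) (2 * π * y₂ * Real.sqrt (1 + x⁻¹)) *
        (x : ℂ) ^ (-(3 * (l₂.re:ℂ) / 4) - 1))
        (fun x : ℝ => ((KR a (2*π*y₁*Real.sqrt (1+x)) * KR a (2*π*y₂*Real.sqrt (1+x⁻¹)) *
          x ^ p : ℝ) : ℂ)) (Set.Ioi 0) := by
      intro x hx
      have h1 : ((l₁.re:ℂ) - (l₃.re:ℂ)) / 2 = ((a:ℝ):ℂ) := by
        rw [ha]; push_cast; ring
      have h2 : (-(3 * (l₂.re:ℂ) / 4) - 1) = ((p:ℝ):ℂ) := by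
        rw [hp]; push_cast; ring
      simp only [h1, h2, KR_ofReal]
      rw [← Complex.ofReal_cpow (le_of_lt hx)]
      push_cast
      ring
    rw [setIntegral_congr_fun measurableSet_Ioi h]
    exact integral_ofReal
  have hy1 : (y₁:ℂ) ^ ((1:ℂ) - (l₂.re:ℂ)/2) = ((y₁ ^ (1 - l₂.re/2) : ℝ) : ℂ) := by
    rw [show ((1:ℂ) - (l₂.re:ℂ)/2) = ((1 - l₂.re/2 : ℝ):ℂ) by push_cast; ring,
      ← Complex.ofReal_cpow h₁.le]
  have hy2 : (y₂:ℂ) ^ ((1:ℂ) + (l₂.re:ℂ)/2) = ((y₂ ^ (1 + l₂.re/2) : ℝ) : ℂ) := by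
    rw [show ((1:ℂ) + (l₂.re:ℂ)/2) = ((1 + l₂.re/2 : ℝ):ℂ) by push_cast; ring,
      ← Complex.ofReal_cpow h₂.le]
  have hW : W (l₁.re : ℂ) (l₂.re : ℂ) (l₃.re : ℂ) y₁ y₂ =
      ((4 * y₁ ^ (1 - l₂.re/2) * y₂ ^ (1 + l₂.re/2) * I : ℝ) : ℂ) := by
    rw [W, hint, hy1, hy2]
    push_cast
    ring
  have hA : (0:ℝ) < y₁ ^ (1 - l₂.re/2) := Real.rpow_pos_of_pos h₁ _
  have hB : (0:ℝ) < y₂ ^ (1 + l₂.re/2) := Real.rpow_pos_of_pos h₂ _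
  refine ⟨by rw [hW]; exact Complex.ofReal_im _, by rw [hW, Complex.ofReal_re]; positivity, ?_⟩
  -- the modulus bound
  rw [hW, Complex.ofReal_re, W]
  have habs1 : ‖(y₁:ℂ) ^ ((1:ℂ) - l₂/2)‖ = y₁ ^ (1 - l₂.re/2) := by
    rw [Complex.norm_cpow_eq_rpow_re_of_pos h₁]
    norm_num
  have habs2 : ‖(y₂:ℂ) ^ ((1:ℂ) + l₂/2)‖ = y₂ ^ (1 + l₂.re/2) := by
    rw [Complex.norm_cpow_eq_rpow_re_of_pos h₂]
    norm_num
  have habsint : ‖∫ x in Set.Ioi (0:ℝ),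
      Kbessel ((l₁ - l₃) / 2) (2 * π * y₁ * Real.sqrt (1 + x)) *
      Kbessel ((l₁ - l₃) / 2) (2 * π * y₂ * Real.sqrt (1 + x⁻¹)) *
      (x : ℂ) ^ (-(3 * l₂ / 4) - 1)‖ ≤ I := by
    rw [hI]
    apply norm_integral_le_of_norm_le (F_integrableOn a p h₁ h₂)
    rw [ae_restrict_iff' measurableSet_Ioi]
    filter_upwards with x hx
    have hx0 : (0:ℝ) < x := hx
    have hxi : 0 < x⁻¹ := by positivity
    have hu₁ : 0 < 2*π*y₁*Real.sqrt (1+x) := by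
      have : (0:ℝ) < Real.sqrt (1+x) := Real.sqrt_pos.mpr (by linarith [hx0])
      positivity
    have hu₂ : 0 < 2*π*y₂*Real.sqrt (1+x⁻¹) := by
      have : (0:ℝ) < Real.sqrt (1+x⁻¹) := Real.sqrt_pos.mpr (by linarith [hx0])
      positivity
    rw [norm_mul, norm_mul]
    have hb1 : ‖Kbessel ((l₁ - l₃) / 2) (2 * π * y₁ * Real.sqrt (1 + x))‖ ≤
        KR a (2*π*y₁*Real.sqrt (1+x)) := by
      have := Kbessel_abs_le ((l₁ - l₃)/2) hu₁
      simpa [ha] using this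
    have hb2 : ‖Kbessel ((l₁ - l₃) / 2) (2 * π * y₂ * Real.sqrt (1 + x⁻¹))‖ ≤
        KR a (2*π*y₂*Real.sqrt (1+x⁻¹)) := by
      have := Kbessel_abs_le ((l₁ - l₃)/2) hu₂
      simpa [ha] using this
    have hb3 : ‖(x : ℂ) ^ (-(3 * l₂ / 4) - 1)‖ = x ^ p := by
      rw [Complex.norm_cpow_eq_rpow_re_of_pos hx0, hp]
      norm_num
    rw [hb3]
    apply mul_le_mul_of_nonneg_right _ (Real.rpow_nonneg hx0.le p)
    exact mul_le_mul hb1 hb2 (norm_nonneg _) (KR_pos a hu₁).le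
  rw [norm_mul, norm_mul, norm_mul, habs1, habs2]
  have h4 : ‖(4:ℂ)‖ = 4 := by
    simp
  rw [h4]
  exact mul_le_mul_of_nonneg_left habsint (by positivity)
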